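/- Let G^{Init} be a rooted binary tree, 𝒢 = {G_1,...,G_k} a set of pairwise separated (leaf-disjoint) subtrees of G^{Init} whose leaf sets together cover all leaves of G^{Init}, and let G^{TR} be a triplet-respecting supertree for G^{Init} and 𝒢. Then for every node x of G^{Init} whose subtree contains at least two of the trees of 𝒢 as subtrees, there exists a node y of G^{TR} such that L(y) = L(x). -/

import Mathlib

inductive BTree (α : Type) where
  | leaf : α → BTree α
  | node : BTree α → BTree α → BTree α
deriving DecidableEq

namespace BTree

variable {α : Type} [DecidableEq α] {σ : Type} [DecidableEq σ] {γ : Type} [DecidableEq γ]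

/-- leaf (label) set of a tree -/
def leaves : BTree α → Finset α
  | leaf a => {a}
  | node l r => leaves l ∪ leaves r

/-- the leaf labels are pairwise distinct -/
def nodupLeaves : BTree α → Prop
  | leaf _ => True
  | node l r => nodupLeaves l ∧ nodupLeaves r ∧ Disjoint (leaves l) (leaves r)

/-- the (unordered) bipartition `(Ll, Lr)` is compatible with the tree:
the whole leaf set lies in one part, or the leaf sets of the two root child
subtrees lie in opposite parts. -/
def compatible : BTree α → Finset α → Finset α → Prop
  | leaf a, Ll, Lr => a ∈ Ll ∨ a ∈ Lr
  | node l r, Ll, Lr =>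
      leaves l ∪ leaves r ⊆ Ll ∨ leaves l ∪ leaves r ⊆ Lr ∨
      (leaves l ⊆ Ll ∧ leaves r ⊆ Lr) ∨ (leaves l ⊆ Lr ∧ leaves r ⊆ Ll)

/-- union of the leaf sets of a list of trees -/
def unionLeaves (Gs : List (BTree α)) : Finset α :=
  Gs.foldr (fun g acc => leaves g ∪ acc) ∅

/-- `(Ll, Lr)` is a bipartition of the union of the leaf sets (both parts
nonempty) compatible with every tree in the list. -/
def isCompBip (Gs : List (BTree α)) (Ll Lr : Finset α) : Prop :=
  Ll ∪ Lr = unionLeaves Gs ∧ Disjoint Ll Lr ∧ Ll.Nonempty ∧ Lr.Nonempty ∧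
    ∀ G ∈ Gs, compatible G Ll Lr

/-- restriction `G|_L` : remove the leaves not in `L` and suppress the
resulting degree-2 nodes; `none` if no leaf of `G` lies in `L`. -/
def restrict : BTree α → Finset α → Option (BTree α)
  | leaf a, L => if a ∈ L then some (leaf a) else none
  | node l r, L =>
      match restrict l L, restrict r L with
      | some l', some r' => some (node l' r')
      | some l', none => some l'
      | none, some r' => some r'
      | none, none => none

/-- isomorphism of rooted leaf-labeled trees (children are unordered) -/
inductive Iso : BTree α → BTree α → Prop
  | leaf (a : α) : Iso (leaf a) (leaf a)
  | node {l r l' r' : BTree α} : Iso l l' → Iso r r' → Iso (node l r) (node l' r')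
  | swap {l r l' r' : BTree α} : Iso l r' → Iso r l' → Iso (node l r) (node l' r')

/-- `G` displays `G'` : the restriction of `G` to the leaves of `G'` is
isomorphic to `G'` (preserving leaf labels). -/
def displays (G G' : BTree α) : Prop :=
  ∃ t, restrict G (leaves G') = some t ∧ Iso t G'

/-- `Subtree t T` : `t` is a complete rooted subtree of `T` (i.e. `t = T[x]`
for some node `x` of `T`).  Equivalently, the root of `T` is a (weak)
ancestor of the root of `t`. -/
inductive Subtree : BTree α → BTree α → Prop
  | refl (t : BTree α) : Subtree t t
  | left {t l r : BTree α} : Subtree t l → Subtree t (node l r)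
  | right {t l r : BTree α} : Subtree t r → Subtree t (node l r)

/-- two nodes (complete subtrees) are separated: neither is a (weak)
ancestor of the other -/
def separated (u v : BTree α) : Prop := ¬ Subtree u v ∧ ¬ Subtree v u

/-- the subtree rooted at the lowest common ancestor of the leaf set `L` -/
def lcaSub : BTree α → Finset α → BTree α
  | leaf a, _ => leaf a
  | node l r, L =>
      if L ⊆ leaves l then lcaSub l L
      else if L ⊆ leaves r then lcaSub r L
      else node l r

/-- `T1` and `T2` induce the same rooted triplet topology on `{a, b, c}` -/
def sameTriplet (T1 T2 : BTree α) (a b c : α) : Prop :=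
  ∃ t1 t2, restrict T1 {a, b, c} = some t1 ∧ restrict T2 {a, b, c} = some t2 ∧ Iso t1 t2

/-- `GTR` is triplet respecting w.r.t. `GInit` and the family `Gs` : for any
three leaves taken from three distinct trees of `Gs`, `GInit` and `GTR`
induce the same rooted triplet topology. -/
def tripletRespecting (GInit GTR : BTree α) (Gs : List (BTree α)) : Prop :=
  ∀ G1 ∈ Gs, ∀ G2 ∈ Gs, ∀ G3 ∈ Gs, G1 ≠ G2 → G1 ≠ G3 → G2 ≠ G3 →
    ∀ a ∈ leaves G1, ∀ b ∈ leaves G2, ∀ c ∈ leaves G3, sameTriplet GInit GTR a b c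

/-- at least two (distinct) trees of `Gs` are subtrees of `t` : `|𝒢(t)| ≥ 2` -/
def atLeastTwo (Gs : List (BTree α)) (t : BTree α) : Prop :=
  ∃ Gi ∈ Gs, ∃ Gj ∈ Gs, Gi ≠ Gj ∧ Subtree Gi t ∧ Subtree Gj t

/-- `Graft T' T R` : `R` is obtained from `T` by grafting `T'` at some node
`x*` of `T`, i.e. subdividing the edge above `x*` (or adding a new root if
`x*` is the root) and attaching `T'` as the new sibling of `x*`. -/
inductive Graft (T' : BTree α) : BTree α → BTree α → Prop
  | atRootL (T : BTree α) : Graft T' T (node T' T)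
  | atRootR (T : BTree α) : Graft T' T (node T T')
  | left {l r g : BTree α} : Graft T' l g → Graft T' (node l r) (node g r)
  | right {l r g : BTree α} : Graft T' r g → Graft T' (node l r) (node l g)

/-- number of edges from the root of `u` down to the node `v`, if `v` is a
node (complete subtree) of `u` -/
def edist : BTree σ → BTree σ → Option ℕ
  | leaf a, v => if leaf a = v then some 0 else none
  | node l r, v =>
      if node l r = v then some 0 else
      match edist l v, edist r v with
      | some n, _ => some (n + 1)
      | none, some n => some (n + 1)
      | none, none => none

/-- number of nodes strictly between an ancestor `u` and a descendant `v` -/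
def inter (u v : BTree σ) : ℕ := (edist u v).getD 1 - 1

/-- node (`lca`) of the species tree `S` associated to a set `L` of genes -/
def specOf (S : BTree σ) (s : γ → σ) (L : Finset γ) : BTree σ := lcaSub S (L.image s)

/-- the species-tree node `s(x)` associated with a gene-tree node `x`
(lca of the species of the leaves below `x`) -/
def spec (S : BTree σ) (s : γ → σ) (t : BTree γ) : BTree σ := specOf S s (leaves t)

/-- the local LCA-reconciliation cost of a node whose own mapping is `su`
and whose children map to `sl` and `sr` -/
def localCost (su sl sr : BTree σ) : ℕ :=
  inter su sl + inter su sr +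
    (if su = sl ∧ su = sr then 1 else if su = sl ∨ su = sr then 2 else 0)

/-- number of duplication nodes of the LCA-reconciliation -/
def dupCount (S : BTree σ) (s : γ → σ) : BTree γ → ℕ
  | leaf _ => 0
  | node l r =>
      dupCount S s l + dupCount S s r +
      (if spec S s (node l r) = spec S s l ∨ spec S s (node l r) = spec S s r then 1 else 0)

/-- minimum number of losses of the LCA-reconciliation: for each edge `(x,c)`,
`inter(s(x), s(c))` losses, plus one more loss for each child `c` of a
duplication node `x` with `s(c) ≠ s(x)` -/
def lossCount (S : BTree σ) (s : γ → σ) : BTree γ → ℕ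
  | leaf _ => 0
  | node l r =>
      lossCount S s l + lossCount S s r +
      (if spec S s (node l r) = spec S s l ∨ spec S s (node l r) = spec S s r then
        (inter (spec S s (node l r)) (spec S s l) +
          if spec S s l = spec S s (node l r) then 0 else 1) +
        (inter (spec S s (node l r)) (spec S s r) +
          if spec S s r = spec S s (node l r) then 0 else 1)
      else
        inter (spec S s (node l r)) (spec S s l) + inter (spec S s (node l r)) (spec S s r))

/-- sum over all internal nodes of the local LCA-reconciliation costs -/
def totalLocal (S : BTree σ) (s : γ → σ) : BTree γ → ℕ
  | leaf _ => 0
  | node l r =>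
      totalLocal S s l + totalLocal S s r +
      localCost (spec S s (node l r)) (spec S s l) (spec S s r)

/-- `G` is a supertree for `Gs` : a tree on the union of the leaf sets
(each leaf once) displaying every tree of `Gs` -/
def isSupertree (Gs : List (BTree γ)) (G : BTree γ) : Prop :=
  leaves G = unionLeaves Gs ∧ nodupLeaves G ∧ ∀ Gi ∈ Gs, displays G Gi

/-- `MinSGT` : minimum LCA-reconciliation cost over all supertrees -/
noncomputable def reconMin (S : BTree σ) (s : γ → σ) (Gs : List (BTree γ)) : ℕ :=
  sInf {c | ∃ G : BTree γ, isSupertree Gs G ∧ totalLocal S s G = c}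

/-- restrictions `G_i|_L` of the trees of the list (dropping empty ones) -/
def restrictList (Gs : List (BTree γ)) (L : Finset γ) : List (BTree γ) :=
  Gs.filterMap fun G => restrict G L

/-- the four possible ordered choices for distributing a tree into the two
parts of a bipartition: whole tree left, whole tree right, left subtree
left & right subtree right, left subtree right & right subtree left -/
def pick : BTree α → ℕ → Finset α × Finset α
  | G, 0 => (leaves G, ∅)
  | G, 1 => (∅, leaves G)
  | node l r, 2 => (leaves l, leaves r)
  | node l r, _ => (leaves r, leaves l)
  | G, _ => (∅, leaves G)

/-- left part produced by a distribution `f` of choices -/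
def partsLeft (Gs : List (BTree α)) (f : Fin Gs.length → Fin 4) : Finset α :=
  Finset.univ.biUnion fun i => (pick (Gs.get i) (f i).val).1

/-- right part produced by a distribution `f` of choices -/
def partsRight (Gs : List (BTree α)) (f : Fin Gs.length → Fin 4) : Finset α :=
  Finset.univ.biUnion fun i => (pick (Gs.get i) (f i).val).2

/-- the complete subtree at a position (path from the root) -/
def subtreeAt : BTree α → List Bool → Option (BTree α)
  | t, [] => some t
  | leaf _, _ :: _ => none
  | node l _, false :: p => subtreeAt l p
  | node _ r, true :: p => subtreeAt r p

/-- the set of positions of internal nodes -/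
def internalPos : BTree α → Finset (List Bool)
  | leaf _ => ∅
  | node l r =>
      insert [] ((internalPos l).image (List.cons false) ∪
        (internalPos r).image (List.cons true))

end BTree

/-- labeled gene trees: each internal node carries `true` (Dup) or `false` (Spec) -/
inductive LTree (α : Type) where
  | leaf : α → LTree α
  | node : Bool → LTree α → LTree α → LTree α
deriving DecidableEq

namespace LTree

variable {α : Type} [DecidableEq α]

def leaves : LTree α → Finset α
  | leaf a => {a}
  | node _ l r => leaves l ∪ leaves r

/-- underlying unlabeled tree -/
def shape : LTree α → BTree α
  | leaf a => BTree.leaf a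
  | node _ l r => BTree.node (shape l) (shape r)

/-- the event label of the root (`none` for a leaf) -/
def rootEv : LTree α → Option Bool
  | leaf _ => none
  | node e _ _ => some e

inductive Subtree : LTree α → LTree α → Prop
  | refl (t : LTree α) : Subtree t t
  | left {t l r : LTree α} {e : Bool} : Subtree t l → Subtree t (node e l r)
  | right {t l r : LTree α} {e : Bool} : Subtree t r → Subtree t (node e l r)

/-- the subtree rooted at the lowest common ancestor of the leaf set `L` -/
def lcaSub : LTree α → Finset α → LTree α
  | leaf a, _ => leaf a
  | node e l r, L =>
      if L ⊆ leaves l then lcaSub l L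
      else if L ⊆ leaves r then lcaSub r L
      else node e l r

/-- `G` displays `G'` (topologically, ignoring labels) -/
def displaysL (G G' : LTree α) : Prop := BTree.displays (shape G) (shape G')

/-- `(G, ev_G)` is label-compatible with `(G', ev_{G'})` : every internal
node `x'` of `G'` has the same event label as `lca_G(L(x'))` -/
def labelCompatible (G G' : LTree α) : Prop :=
  ∀ (e : Bool) (l r : LTree α), Subtree (node e l r) G' →
    rootEv (lcaSub G (leaves (node e l r))) = some e

end LTree

namespace BTree

variable {α : Type} [DecidableEq α]

theorem leaves_nonempty' (T : BTree α) : T.leaves.Nonempty := by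
  induction T with
  | leaf a => exact ⟨a, by simp [leaves]⟩
  | node l r ihl ihr =>
      obtain ⟨a, ha⟩ := ihl
      exact ⟨a, by simp [leaves, ha]⟩

theorem leaves_subset_of_subtree' {u T : BTree α} (h : Subtree u T) : u.leaves ⊆ T.leaves := by
  induction h with
  | refl => exact subset_rfl
  | left h ih => exact ih.trans (by simp [leaves])
  | right h ih => exact ih.trans (by simp [leaves])

theorem nodup_of_subtree' {u T : BTree α} (h : Subtree u T) (hnd : T.nodupLeaves) :
    u.nodupLeaves := by
  induction h with
  | refl => exact hnd
  | left h ih => exact ih hnd.1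
  | right h ih => exact ih hnd.2.1

theorem subtree_nested' {T : BTree α} (hnd : T.nodupLeaves) :
    ∀ {u v : BTree α}, Subtree u T → Subtree v T →
    (u.leaves ∩ v.leaves).Nonempty → Subtree u v ∨ Subtree v u := by
  induction T with
  | leaf a =>
      intro u v hu hv _
      cases hu; cases hv; exact Or.inl (Subtree.refl _)
  | node l r ihl ihr =>
      intro u v hu hv hi
      obtain ⟨hl, hr, hd⟩ := hnd
      cases hu with
      | refl => exact Or.inr hv
      | left hu' =>
          cases hv with
          | refl => exact Or.inl (Subtree.left hu')
          | left hv' => exact ihl hl hu' hv' hi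
          | right hv' =>
              exfalso
              obtain ⟨w, hw⟩ := hi
              simp only [Finset.mem_inter] at hw
              exact (Finset.disjoint_left.1 hd)
                (leaves_subset_of_subtree' hu' hw.1)
                (leaves_subset_of_subtree' hv' hw.2)
      | right hu' =>
          cases hv with
          | refl => exact Or.inl (Subtree.right hu')
          | left hv' =>
              exfalso
              obtain ⟨w, hw⟩ := hi
              simp only [Finset.mem_inter] at hw
              exact (Finset.disjoint_left.1 hd)
                (leaves_subset_of_subtree' hv' hw.2)
                (leaves_subset_of_subtree' hu' hw.1)
          | right hv' => exact ihr hr hu' hv' hi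

theorem restrict_none' {T : BTree α} {S : Finset α} (h : T.leaves ∩ S = ∅) :
    restrict T S = none := by
  induction T with
  | leaf a =>
      have : a ∉ S := by
        intro hm
        have := Finset.eq_empty_iff_forall_notMem.1 h a
        simp [leaves, hm] at this
      simp [restrict, this]
  | node l r ihl ihr =>
      have hle : l.leaves ∩ S = ∅ := by
        apply Finset.eq_empty_of_forall_notMem
        intro w hw
        simp only [Finset.mem_inter] at hw
        have : w ∈ (node l r).leaves ∩ S :=
          Finset.mem_inter.2 ⟨by simp [leaves, hw.1], hw.2⟩
        simp [h] at this
      have hre : r.leaves ∩ S = ∅ := by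
        apply Finset.eq_empty_of_forall_notMem
        intro w hw
        simp only [Finset.mem_inter] at hw
        have : w ∈ (node l r).leaves ∩ S :=
          Finset.mem_inter.2 ⟨by simp [leaves, hw.1], hw.2⟩
        simp [h] at this
      simp [restrict, ihl hle, ihr hre]

theorem restrict_some' {T : BTree α} {S : Finset α} (h : (T.leaves ∩ S).Nonempty) :
    ∃ t, restrict T S = some t ∧ t.leaves = T.leaves ∩ S := by
  induction T with
  | leaf a =>
      obtain ⟨w, hw⟩ := h
      simp only [leaves, Finset.mem_inter, Finset.mem_singleton] at hw
      obtain ⟨rfl, hwS⟩ := hw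
      exact ⟨leaf w, by simp [restrict, hwS], by simp [leaves, Finset.inter_comm,
        Finset.singleton_inter_of_mem hwS]⟩
  | node l r ihl ihr =>
      by_cases hlne : (l.leaves ∩ S).Nonempty
      · obtain ⟨t1, ht1, hl1⟩ := ihl hlne
        by_cases hrne : (r.leaves ∩ S).Nonempty
        · obtain ⟨t2, ht2, hl2⟩ := ihr hrne
          refine ⟨node t1 t2, by simp [restrict, ht1, ht2], ?_⟩
          simp [leaves, hl1, hl2, Finset.union_inter_distrib_right]
        · have hre : r.leaves ∩ S = ∅ := Finset.not_nonempty_iff_eq_empty.1 hrne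
          refine ⟨t1, by simp [restrict, ht1, restrict_none' hre], ?_⟩
          simp [leaves, hl1, Finset.union_inter_distrib_right, hre]
      · have hle : l.leaves ∩ S = ∅ := Finset.not_nonempty_iff_eq_empty.1 hlne
        have hrne : (r.leaves ∩ S).Nonempty := by
          obtain ⟨w, hw⟩ := h
          simp only [leaves, Finset.mem_inter, Finset.mem_union] at hw
          rcases hw.1 with hwl | hwr
          · exact absurd (Finset.mem_inter.2 ⟨hwl, hw.2⟩) (by simp [hle])
          · exact ⟨w, Finset.mem_inter.2 ⟨hwr, hw.2⟩⟩
        obtain ⟨t2, ht2, hl2⟩ := ihr hrne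
        refine ⟨t2, by simp [restrict, ht2, restrict_none' hle], ?_⟩
        simp [leaves, hl2, Finset.union_inter_distrib_right, hle]

theorem restrict_subtree' {T u : BTree α} (hnd : T.nodupLeaves) (hu : Subtree u T)
    {S : Finset α} (hS : S ⊆ u.leaves) (hne : S.Nonempty) :
    restrict T S = restrict u S := by
  induction hu with
  | refl => rfl
  | @left l r h ih =>
      obtain ⟨hl, hr, hd⟩ := hnd
      have h1 : restrict l S = restrict u S := ih hl
      have hSl : S ⊆ l.leaves := hS.trans (leaves_subset_of_subtree' h)
      have hre : r.leaves ∩ S = ∅ := by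
        apply Finset.eq_empty_of_forall_notMem
        intro w hw
        simp only [Finset.mem_inter] at hw
        exact (Finset.disjoint_left.1 hd) (hSl hw.2) hw.1
      have hsne : (u.leaves ∩ S).Nonempty := by
        obtain ⟨w, hw⟩ := hne
        exact ⟨w, Finset.mem_inter.2 ⟨hS hw, hw⟩⟩
      obtain ⟨tt, htt, _⟩ := restrict_some' hsne
      simp [restrict, h1, htt, restrict_none' hre]
  | @right l r h ih =>
      obtain ⟨hl, hr, hd⟩ := hnd
      have h1 : restrict r S = restrict u S := ih hr
      have hSr : S ⊆ r.leaves := hS.trans (leaves_subset_of_subtree' h)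
      have hle : l.leaves ∩ S = ∅ := by
        apply Finset.eq_empty_of_forall_notMem
        intro w hw
        simp only [Finset.mem_inter] at hw
        exact (Finset.disjoint_right.1 hd) (hSr hw.2) hw.1
      have hsne : (u.leaves ∩ S).Nonempty := by
        obtain ⟨w, hw⟩ := hne
        exact ⟨w, Finset.mem_inter.2 ⟨hS hw, hw⟩⟩
      obtain ⟨tt, htt, _⟩ := restrict_some' hsne
      simp [restrict, h1, htt, restrict_none' hle]

theorem iso_leaves' {s t : BTree α} (h : Iso s t) : s.leaves = t.leaves := by
  induction h with
  | leaf a => rfl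
  | node h1 h2 ih1 ih2 => simp [leaves, ih1, ih2]
  | swap h1 h2 ih1 ih2 => simp [leaves, ih1, ih2, Finset.union_comm]

theorem lcaSub_subtree' (T : BTree α) (L : Finset α) : Subtree (lcaSub T L) T := by
  induction T with
  | leaf a => exact Subtree.refl _
  | node l r ihl ihr =>
      simp only [lcaSub]
      split
      · exact Subtree.left ihl
      · split
        · exact Subtree.right ihr
        · exact Subtree.refl _

theorem subset_leaves_lcaSub' {T : BTree α} {L : Finset α} (h : L ⊆ T.leaves) :
    L ⊆ (lcaSub T L).leaves := by
  induction T with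
  | leaf a => simpa [lcaSub] using h
  | node l r ihl ihr =>
      simp only [lcaSub]
      split
      · exact ihl ‹_›
      · split
        · exact ihr ‹_›
        · exact h

theorem lcaSub_split' {T : BTree α} {L : Finset α} (h : L ⊆ T.leaves)
    {y1 y2 : BTree α} (heq : lcaSub T L = node y1 y2) :
    (L ∩ y1.leaves).Nonempty ∧ (L ∩ y2.leaves).Nonempty := by
  induction T with
  | leaf a => simp [lcaSub] at heq
  | node l r ihl ihr =>
      simp only [lcaSub] at heq
      split at heq
      · exact ihl ‹_› heq
      · split at heq
        · exact ihr ‹_› heq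
        · obtain ⟨rfl, rfl⟩ : l = y1 ∧ r = y2 := by
            injection heq with h1 h2; exact ⟨h1, h2⟩
          constructor
          · obtain ⟨w, hw1, hw2⟩ := Finset.not_subset.1 ‹¬ L ⊆ r.leaves›
            have : w ∈ l.leaves ∪ r.leaves := h hw1
            refine ⟨w, Finset.mem_inter.2 ⟨hw1, ?_⟩⟩
            simp only [Finset.mem_union] at this
            tauto
          · obtain ⟨w, hw1, hw2⟩ := Finset.not_subset.1 ‹¬ L ⊆ l.leaves›
            have : w ∈ l.leaves ∪ r.leaves := h hw1
            refine ⟨w, Finset.mem_inter.2 ⟨hw1, ?_⟩⟩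
            simp only [Finset.mem_union] at this
            tauto

theorem mem_unionLeaves' {Gs : List (BTree α)} {w : α} :
    w ∈ unionLeaves Gs ↔ ∃ G ∈ Gs, w ∈ G.leaves := by
  induction Gs with
  | nil => simp [unionLeaves]
  | cons g gs ih =>
      simp only [unionLeaves, List.foldr] at ih ⊢
      simp [Finset.mem_union, ih]

/-- the `a,b | z` cherry in a tree with a subtree `x` containing `a, b`
but not `z` -/
theorem cherry_restrict' {T : BTree α} (hnd : T.nodupLeaves) {x : BTree α}
    (hx : Subtree x T) {a b z : α} (ha : a ∈ x.leaves) (hb : b ∈ x.leaves)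
    (hz : z ∈ T.leaves) (hzx : z ∉ x.leaves) (hab : a ≠ b) :
    ∃ u v, restrict T {a, b, z} = some (node u v) ∧
      ((u.leaves = {a, b} ∧ v.leaves = {z}) ∨ (u.leaves = {z} ∧ v.leaves = {a, b})) := by
  induction hx with
  | refl => exact absurd hz hzx
  | @left l r h ih =>
      obtain ⟨hl, hr, hd⟩ := hnd
      have hal : a ∈ l.leaves := leaves_subset_of_subtree' h ha
      have hbl : b ∈ l.leaves := leaves_subset_of_subtree' h hb
      simp only [leaves, Finset.mem_union] at hz
      rcases hz with hzl | hzr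
      · obtain ⟨u, v, heq, hp⟩ := ih hl hzl
        have hre : r.leaves ∩ ({a, b, z} : Finset α) = ∅ := by
          apply Finset.eq_empty_of_forall_notMem
          intro w hw
          simp only [Finset.mem_inter, Finset.mem_insert, Finset.mem_singleton] at hw
          rcases hw.2 with rfl | rfl | rfl
          · exact (Finset.disjoint_left.1 hd) hal hw.1
          · exact (Finset.disjoint_left.1 hd) hbl hw.1
          · exact (Finset.disjoint_left.1 hd) hzl hw.1
        exact ⟨u, v, by simp [restrict, heq, restrict_none' hre], hp⟩
      · have hzl : z ∉ l.leaves := fun hc => (Finset.disjoint_left.1 hd) hc hzr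
        have hli : l.leaves ∩ ({a, b, z} : Finset α) = {a, b} := by
          ext w
          simp only [Finset.mem_inter, Finset.mem_insert, Finset.mem_singleton]
          constructor
          · rintro ⟨hw, rfl | rfl | rfl⟩ <;> tauto
          · rintro (rfl | rfl) <;> tauto
        have hri : r.leaves ∩ ({a, b, z} : Finset α) = {z} := by
          ext w
          simp only [Finset.mem_inter, Finset.mem_insert, Finset.mem_singleton]
          constructor
          · rintro ⟨hw, rfl | rfl | rfl⟩
            · exact absurd hw fun hc => (Finset.disjoint_left.1 hd) hal hc
            · exact absurd hw fun hc => (Finset.disjoint_left.1 hd) hbl hc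
            · rfl
          · rintro rfl; tauto
        obtain ⟨t1, ht1, hlv1⟩ := restrict_some' (S := ({a, b, z} : Finset α))
          (T := l) (by rw [hli]; exact ⟨a, by simp⟩)
        obtain ⟨t2, ht2, hlv2⟩ := restrict_some' (S := ({a, b, z} : Finset α))
          (T := r) (by rw [hri]; exact ⟨z, by simp⟩)
        exact ⟨t1, t2, by simp [restrict, ht1, ht2],
          Or.inl ⟨by rw [hlv1, hli], by rw [hlv2, hri]⟩⟩
  | @right l r h ih =>
      obtain ⟨hl, hr, hd⟩ := hnd
      have hal : a ∈ r.leaves := leaves_subset_of_subtree' h ha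
      have hbl : b ∈ r.leaves := leaves_subset_of_subtree' h hb
      simp only [leaves, Finset.mem_union] at hz
      rcases hz with hzl | hzr
      · have hzr' : z ∉ r.leaves := fun hc => (Finset.disjoint_left.1 hd) hzl hc
        have hri : r.leaves ∩ ({a, b, z} : Finset α) = {a, b} := by
          ext w
          simp only [Finset.mem_inter, Finset.mem_insert, Finset.mem_singleton]
          constructor
          · rintro ⟨hw, rfl | rfl | rfl⟩ <;> tauto
          · rintro (rfl | rfl) <;> tauto
        have hli : l.leaves ∩ ({a, b, z} : Finset α) = {z} := by
          ext w
          simp only [Finset.mem_inter, Finset.mem_insert, Finset.mem_singleton]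
          constructor
          · rintro ⟨hw, rfl | rfl | rfl⟩
            · exact absurd hw fun hc => (Finset.disjoint_left.1 hd) hc hal
            · exact absurd hw fun hc => (Finset.disjoint_left.1 hd) hc hbl
            · rfl
          · rintro rfl; tauto
        obtain ⟨t1, ht1, hlv1⟩ := restrict_some' (S := ({a, b, z} : Finset α))
          (T := l) (by rw [hli]; exact ⟨z, by simp⟩)
        obtain ⟨t2, ht2, hlv2⟩ := restrict_some' (S := ({a, b, z} : Finset α))
          (T := r) (by rw [hri]; exact ⟨a, by simp⟩)
        exact ⟨t1, t2, by simp [restrict, ht1, ht2],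
          Or.inr ⟨by rw [hlv1, hli], by rw [hlv2, hri]⟩⟩
      · obtain ⟨u, v, heq, hp⟩ := ih hr hzr
        have hle : l.leaves ∩ ({a, b, z} : Finset α) = ∅ := by
          apply Finset.eq_empty_of_forall_notMem
          intro w hw
          simp only [Finset.mem_inter, Finset.mem_insert, Finset.mem_singleton] at hw
          rcases hw.2 with rfl | rfl | rfl
          · exact (Finset.disjoint_left.1 hd) hw.1 hal
          · exact (Finset.disjoint_left.1 hd) hw.1 hbl
          · exact (Finset.disjoint_left.1 hd) hw.1 hzr
        exact ⟨u, v, by simp [restrict, heq, restrict_none' hle], hp⟩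

end BTree

set_option maxHeartbeats 2000000 in
/-- in a triplet-respecting supertree, every node `x` of
`G^{Init}` with `|𝒢(x)| ≥ 2` has a corresponding node `y` with the same
leaf set. -/
theorem stmt2 {α : Type} [DecidableEq α] (GInit GTR : BTree α) (Gs : List (BTree α))
    (hndI : GInit.nodupLeaves) (hndT : GTR.nodupLeaves)
    (hsub : ∀ Gi ∈ Gs, BTree.Subtree Gi GInit)
    (hdisj : Gs.Pairwise fun a b => Disjoint a.leaves b.leaves)
    (hcover : BTree.unionLeaves Gs = GInit.leaves)
    (hleaves : GTR.leaves = GInit.leaves)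
    (hdisp : ∀ Gi ∈ Gs, GTR.displays Gi)
    (htrip : BTree.tripletRespecting GInit GTR Gs)
    (x : BTree α) (hx : BTree.Subtree x GInit)
    (h2 : BTree.atLeastTwo Gs x) :
    ∃ y, BTree.Subtree y GTR ∧ y.leaves = x.leaves := by
  classical
  open BTree in
  obtain ⟨Gi, hGi, Gj, hGj, hij, hGix, hGjx⟩ := h2
  set L := x.leaves with hLdef
  have hLI : L ⊆ GInit.leaves := BTree.leaves_subset_of_subtree' hx
  have hLT : L ⊆ GTR.leaves := by rw [hleaves]; exact hLI
  have hLne : L.Nonempty := BTree.leaves_nonempty' x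
  refine ⟨BTree.lcaSub GTR L, BTree.lcaSub_subtree' _ _, ?_⟩
  have hLy : L ⊆ (BTree.lcaSub GTR L).leaves := BTree.subset_leaves_lcaSub' hLT
  have hysub : BTree.Subtree (BTree.lcaSub GTR L) GTR := BTree.lcaSub_subtree' _ _
  have hGiL : Gi.leaves ⊆ L := BTree.leaves_subset_of_subtree' hGix
  have hGjL : Gj.leaves ⊆ L := BTree.leaves_subset_of_subtree' hGjx
  have hdisj' : ∀ Ga ∈ Gs, ∀ Gb ∈ Gs, Ga ≠ Gb → Disjoint Ga.leaves Gb.leaves := by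
    intro Ga ha Gb hb hne
    haveI : Std.Symm (fun a b : BTree α => Disjoint a.leaves b.leaves) := ⟨fun A B h => h.symm⟩
    exact List.Pairwise.forall hdisj ha hb hne
  have key : ∀ w ∈ L, ∃ Gw ∈ Gs, w ∈ Gw.leaves ∧ Gw.leaves ⊆ L := by
    intro w hw
    have hwI : w ∈ GInit.leaves := hLI hw
    rw [← hcover] at hwI
    obtain ⟨Gw, hGw, hwGw⟩ := BTree.mem_unionLeaves'.1 hwI
    refine ⟨Gw, hGw, hwGw, ?_⟩
    have := BTree.subtree_nested' hndI (hsub Gw hGw) hx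
      ⟨w, Finset.mem_inter.2 ⟨hwGw, hw⟩⟩
    rcases this with hsw | hsw
    · exact BTree.leaves_subset_of_subtree' hsw
    · exfalso
      have hGiw : Gi = Gw := by
        by_contra hne
        have hd := hdisj' Gi hGi Gw hGw hne
        obtain ⟨c, hc⟩ := BTree.leaves_nonempty' Gi
        exact (Finset.disjoint_left.1 hd) hc
          (BTree.leaves_subset_of_subtree' hsw (hGiL hc))
      have hGjw : Gj = Gw := by
        by_contra hne
        have hd := hdisj' Gj hGj Gw hGw hne
        obtain ⟨c, hc⟩ := BTree.leaves_nonempty' Gj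
        exact (Finset.disjoint_left.1 hd) hc
          (BTree.leaves_subset_of_subtree' hsw (hGjL hc))
      exact hij (hGiw.trans hGjw.symm)
  cases hY : BTree.lcaSub GTR L with
  | leaf c =>
      rw [hY] at hLy
      have hLc : L = {c} := by
        rcases Finset.subset_singleton_iff.1 (by simpa [BTree.leaves] using hLy) with h | h
        · exact absurd h (Finset.nonempty_iff_ne_empty.1 hLne)
        · exact h
      simp [BTree.leaves, ← hLdef, hLc]
  | node y1 y2 =>
      rw [hY] at hLy hysub
      have hndy : (BTree.node y1 y2).nodupLeaves := BTree.nodup_of_subtree' hysub hndT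
      obtain ⟨hnd1, hnd2, hd12⟩ := hndy
      obtain ⟨⟨a0, ha0⟩, ⟨b0, hb0⟩⟩ := BTree.lcaSub_split' hLT hY
      simp only [Finset.mem_inter] at ha0 hb0
      obtain ⟨a, b, Ga, Gb, hGa, hGb, hGab, haGa, hbGb, hGaL, hGbL, hay1, hby2⟩ :
          ∃ a b Ga Gb, Ga ∈ Gs ∧ Gb ∈ Gs ∧ Ga ≠ Gb ∧ a ∈ Ga.leaves ∧ b ∈ Gb.leaves ∧
            Ga.leaves ⊆ L ∧ Gb.leaves ⊆ L ∧ a ∈ y1.leaves ∧ b ∈ y2.leaves := by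
        obtain ⟨Ga, hGa, haGa, hGaL⟩ := key a0 ha0.1
        obtain ⟨Gb, hGb, hbGb, hGbL⟩ := key b0 hb0.1
        by_cases hne : Ga ≠ Gb
        · exact ⟨a0, b0, Ga, Gb, hGa, hGb, hne, haGa, hbGb, hGaL, hGbL, ha0.2, hb0.2⟩
        · push_neg at hne
          subst hne
          have hex : ∃ Gd ∈ Gs, Gd ≠ Ga ∧ Gd.leaves ⊆ L := by
            by_cases hia : Gi = Ga
            · refine ⟨Gj, hGj, ?_, hGjL⟩
              rw [← hia]; exact fun h => hij h.symm
            · exact ⟨Gi, hGi, hia, hGiL⟩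
          obtain ⟨Gd, hGd, hdGa, hGdL⟩ := hex
          obtain ⟨c, hc⟩ := BTree.leaves_nonempty' Gd
          have hcL : c ∈ L := hGdL hc
          have hcY : c ∈ y1.leaves ∪ y2.leaves := by
            have := hLy hcL; simpa [BTree.leaves] using this
          rcases Finset.mem_union.1 hcY with hc1 | hc2
          · exact ⟨c, b0, Gd, Ga, hGd, hGa, hdGa, hc, hbGb, hGdL, hGaL, hc1, hb0.2⟩
          · exact ⟨a0, c, Ga, Gd, hGa, hGd, fun h => hdGa h.symm, haGa, hc,
              hGaL, hGdL, ha0.2, hc2⟩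
      have hab : a ≠ b := fun h =>
        (Finset.disjoint_left.1 (hdisj' Ga hGa Gb hGb hGab)) haGa (h ▸ hbGb)
      have haL : a ∈ L := hGaL haGa
      have hbL : b ∈ L := hGbL hbGb
      show (BTree.node y1 y2).leaves = L
      apply Finset.Subset.antisymm
      · intro z hz
        by_contra hzL
        have hzT : z ∈ GTR.leaves := BTree.leaves_subset_of_subtree' hysub hz
        have hzI : z ∈ GInit.leaves := hleaves ▸ hzT
        obtain ⟨Gc, hGc, hzGc⟩ := BTree.mem_unionLeaves'.1 (hcover ▸ hzI)
        have hca : Gc ≠ Ga := fun h => hzL (hGaL (h ▸ hzGc))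
        have hcb : Gc ≠ Gb := fun h => hzL (hGbL (h ▸ hzGc))
        have hza : z ≠ a := fun h => hzL (h ▸ haL)
        have hzb : z ≠ b := fun h => hzL (h ▸ hbL)
        obtain ⟨u, v, hres, hp⟩ := BTree.cherry_restrict' hndI hx haL hbL hzI hzL hab
        obtain ⟨s1, s2, hr1, hr2, hiso⟩ :=
          htrip Ga hGa Gb hGb Gc hGc hGab hca.symm hcb.symm a haGa b hbGb z hzGc
        have hs1 : s1 = BTree.node u v := by
          rw [hres] at hr1; exact (Option.some_inj.1 hr1).symm
        have habzY : ({a, b, z} : Finset α) ⊆ (BTree.node y1 y2).leaves := by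
          intro w hw
          simp only [Finset.mem_insert, Finset.mem_singleton] at hw
          rcases hw with rfl | rfl | rfl
          · simp [BTree.leaves, hay1]
          · simp [BTree.leaves, hby2]
          · exact hz
        have hrTR : BTree.restrict GTR {a, b, z} =
            BTree.restrict (BTree.node y1 y2) {a, b, z} :=
          BTree.restrict_subtree' hndT hysub habzY ⟨a, by simp⟩
        have hzy : z ∈ y1.leaves ∨ z ∈ y2.leaves := by
          simpa [BTree.leaves] using hz
        have hay2 : a ∉ y2.leaves := Finset.disjoint_left.1 hd12 hay1
        have hby1 : b ∉ y1.leaves := Finset.disjoint_right.1 hd12 hby2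
        -- compute the two children's leaf sets on the GTR side
        obtain ⟨A1, A2, hA1, hA2, hABab⟩ :
            ∃ A1 A2 : Finset α, y1.leaves ∩ ({a, b, z} : Finset α) = A1 ∧
              y2.leaves ∩ ({a, b, z} : Finset α) = A2 ∧
              ({a, b} : Finset α) ≠ A1 ∧ ({a, b} : Finset α) ≠ A2 ∧
              ({z} : Finset α) ≠ A1 ∧ ({z} : Finset α) ≠ A2 ∧
              A1.Nonempty ∧ A2.Nonempty := by
          rcases hzy with hz1 | hz2
          · have hzy2 : z ∉ y2.leaves := Finset.disjoint_left.1 hd12 hz1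
            refine ⟨{a, z}, {b}, ?_, ?_, ?_, ?_, ?_, ?_, ⟨a, by simp⟩, ⟨b, by simp⟩⟩
            · ext w
              simp only [Finset.mem_inter, Finset.mem_insert, Finset.mem_singleton]
              constructor
              · rintro ⟨hw, rfl | rfl | rfl⟩ <;> tauto
              · rintro (rfl | rfl) <;> tauto
            · ext w
              simp only [Finset.mem_inter, Finset.mem_insert, Finset.mem_singleton]
              constructor
              · rintro ⟨hw, rfl | rfl | rfl⟩ <;> tauto
              · rintro rfl <;> tauto
            · intro h
              have : b ∈ ({a, z} : Finset α) := by rw [← h]; simp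
              simp only [Finset.mem_insert, Finset.mem_singleton] at this
              rcases this with h' | h'
              · exact hab h'.symm
              · exact hzb h'.symm
            · intro h
              have : a ∈ ({b} : Finset α) := by rw [← h]; simp
              simp only [Finset.mem_singleton] at this
              exact hab this
            · intro h
              have : a ∈ ({z} : Finset α) := by rw [h]; simp
              simp only [Finset.mem_singleton] at this
              exact hza this.symm
            · intro h
              have : z ∈ ({b} : Finset α) := by rw [← h]; simp
              simp only [Finset.mem_singleton] at this
              exact hzb this
          · have hzy1 : z ∉ y1.leaves := Finset.disjoint_right.1 hd12 hz2
            refine ⟨{a}, {b, z}, ?_, ?_, ?_, ?_, ?_, ?_, ⟨a, by simp⟩, ⟨b, by simp⟩⟩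
            · ext w
              simp only [Finset.mem_inter, Finset.mem_insert, Finset.mem_singleton]
              constructor
              · rintro ⟨hw, rfl | rfl | rfl⟩ <;> tauto
              · rintro rfl <;> tauto
            · ext w
              simp only [Finset.mem_inter, Finset.mem_insert, Finset.mem_singleton]
              constructor
              · rintro ⟨hw, rfl | rfl | rfl⟩ <;> tauto
              · rintro (rfl | rfl) <;> tauto
            · intro h
              have : b ∈ ({a} : Finset α) := by rw [← h]; simp
              simp only [Finset.mem_singleton] at this
              exact hab this.symm
            · intro h
              have : a ∈ ({b, z} : Finset α) := by rw [← h]; simp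
              simp only [Finset.mem_insert, Finset.mem_singleton] at this
              rcases this with h' | h'
              · exact hab h'
              · exact hza h'.symm
            · intro h
              have : a ∈ ({z} : Finset α) := by rw [h]; simp
              simp only [Finset.mem_singleton] at this
              exact hza this.symm
            · intro h
              have : b ∈ ({z} : Finset α) := by rw [h]; simp
              simp only [Finset.mem_singleton] at this
              exact hzb this.symm
        obtain ⟨hab1, hab2, hz1, hz2', hA1ne, hA2ne⟩ := hABab
        obtain ⟨t1, ht1, hlt1⟩ := BTree.restrict_some' (T := y1)
          (S := ({a, b, z} : Finset α)) (by rw [hA1]; exact hA1ne)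
        obtain ⟨t2, ht2, hlt2⟩ := BTree.restrict_some' (T := y2)
          (S := ({a, b, z} : Finset α)) (by rw [hA2]; exact hA2ne)
        have hres2 : BTree.restrict (BTree.node y1 y2) ({a, b, z} : Finset α) =
            some (BTree.node t1 t2) := by
          simp [BTree.restrict, ht1, ht2]
        have hs2 : s2 = BTree.node t1 t2 := by
          rw [hrTR, hres2] at hr2
          exact (Option.some_inj.1 hr2).symm
        rw [hs1, hs2] at hiso
        have hlt1' : t1.leaves = A1 := by rw [hlt1, hA1]
        have hlt2' : t2.leaves = A2 := by rw [hlt2, hA2]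
        cases hiso with
        | node h1 h2 =>
            have e1 : u.leaves = A1 := by rw [BTree.iso_leaves' h1, hlt1']
            have e2 : v.leaves = A2 := by rw [BTree.iso_leaves' h2, hlt2']
            rcases hp with ⟨hp1, hp2⟩ | ⟨hp1, hp2⟩
            · exact hab1 (by rw [← hp1, e1])
            · exact hz1 (by rw [← hp1, e1])
        | swap h1 h2 =>
            have e1 : u.leaves = A2 := by rw [BTree.iso_leaves' h1, hlt2']
            have e2 : v.leaves = A1 := by rw [BTree.iso_leaves' h2, hlt1']
            rcases hp with ⟨hp1, hp2⟩ | ⟨hp1, hp2⟩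
            · exact hab2 (by rw [← hp1, e1])
            · exact hz2' (by rw [← hp1, e1])
      · exact hLy
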